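/- If T is a sound (every provable statement is true) recursively enumerable theory whose language can express membership statements 'n ∉ X' for a recursively enumerable but non-recursive set X, then there exists a natural number n₀ such that n₀ ∉ X is true but T does not prove 'n₀ ∉ X'. -/

import Mathlib

/-- A predicate on ℕ is recursively enumerable if it is the domain of a
partial recursive function. -/
def REPredNat (p : ℕ → Prop) : Prop :=
  ∃ f : ℕ →. ℕ, Partrec f ∧ ∀ n, p n ↔ (f n).Dom

lemma REPredNat.toRePred {p : ℕ → Prop} (h : REPredNat p) : REPred p := by
  obtain ⟨f, hf, hfp⟩ := h
  exact (Partrec.dom_re hf).of_eq fun n => (hfp n).symm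

/-- If `X` is r.e. but not recursive and `ProvNotIn n` expresses that the sound,
recursively enumerable theory `T` proves the sentence "n ∉ X" (soundness: whatever
is proved of this form is true; the set of provable such sentences is r.e.),
then some true sentence "n₀ ∉ X" is unprovable in `T`. -/
theorem incompleteness_from_nonrecursive_set
    (X : ℕ → Prop) (hXre : REPredNat X) (hXnotrec : ¬ ComputablePred X)
    (ProvNotIn : ℕ → Prop)
    (hProvRe : REPredNat ProvNotIn)
    (hSound : ∀ n, ProvNotIn n → ¬ X n) :
    ∃ n₀, ¬ X n₀ ∧ ¬ ProvNotIn n₀ := by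
  by_contra h
  push_neg at h
  apply hXnotrec
  refine ComputablePred.computable_iff_re_compl_re'.2 ⟨hXre.toRePred, ?_⟩
  exact hProvRe.toRePred.of_eq fun n => ⟨hSound n, fun hx => h n hx⟩
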